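/- Let t, j be integers with 0 ≤ t ≤ j. For n ≥ 0 let a_n denote the number of Deutsch paths of length n from height t to height j all of whose heights h_i satisfy h_i ≥ 0 (no upper bound). Then in the formal power series ring ℤ[[v]], the series S = Σ_{n≥0} a_n · vⁿ · ((1+v+v²)⁻¹)ⁿ satisfies S · (1-v) · (1+v)^{j-t+2} = v^{j-t} · (1-v^{t+2}) · (1+v+v²). -/

import Mathlib

open PowerSeries Finset

/-- The power series `1 + v + v²` over `ℤ`. -/
noncomputable def q : PowerSeries ℤ := 1 + X + X ^ 2

/-- `v · (1+v+v²)⁻¹` as a formal power series over `ℤ`. -/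
noncomputable def w : PowerSeries ℤ := X * PowerSeries.invOfUnit q 1

/-- `p` is a Deutsch path of length `n`: each step is either an up-step `+1`
or a down-step of arbitrary (negative) size. -/
def IsDeutschPath (n : ℕ) (p : Fin (n + 1) → ℤ) : Prop :=
  ∀ i : Fin n, p i.succ - p i.castSucc = 1 ∨ p i.succ - p i.castSucc ≤ -1

/-- Number of Deutsch paths of length `n` from height `a` to height `b`
all of whose heights satisfy the predicate `P`. -/
noncomputable def pathCount (n : ℕ) (a b : ℤ) (P : ℤ → Prop) : ℕ :=
  Nat.card {p : Fin (n + 1) → ℤ //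
    p 0 = a ∧ p (Fin.last n) = b ∧ (∀ i, P (p i)) ∧ IsDeutschPath n p}

/-- The power series `Σ_{n≥0} a_n · vⁿ · ((1+v+v²)⁻¹)ⁿ`.  Since the `n`-th
summand has order `≥ n`, its coefficient of `v^N` is the (finite) sum of the
corresponding coefficients of the summands with `n ≤ N`. -/
noncomputable def series (a : ℕ → ℕ) : PowerSeries ℤ :=
  PowerSeries.mk fun N => ∑ n ∈ range (N + 1), (a n : ℤ) * coeff N (w ^ n)

/-! ### Combinatorial part -/

abbrev pset (n : ℕ) (a b : ℤ) : Type :=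
  {p : Fin (n + 1) → ℤ //
    p 0 = a ∧ p (Fin.last n) = b ∧ (∀ i, (0:ℤ) ≤ p i) ∧ IsDeutschPath n p}

lemma pathCount_eq (n : ℕ) (a b : ℤ) :
    pathCount n a b (fun x => 0 ≤ x) = Nat.card (pset n a b) := rfl

lemma path_le {n : ℕ} {a : ℤ} {p : Fin (n + 1) → ℤ} (h0 : p 0 = a)
    (hd : IsDeutschPath n p) : ∀ i : Fin (n + 1), p i ≤ a + i.val := by
  intro i
  induction i using Fin.induction with
  | zero => simp [h0]
  | succ i ih =>
    have hstep : p i.succ ≤ p i.castSucc + 1 := by rcases hd i with h | h <;> omega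
    have h1 : (i.castSucc : ℕ) = (i : ℕ) := rfl
    have h2 : (i.succ : ℕ) = (i : ℕ) + 1 := rfl
    rw [h1] at ih
    rw [h2]
    push_cast at *
    omega

instance pset_finite (n : ℕ) (a b : ℤ) : Finite (pset n a b) := by
  have hmem : ∀ (x : pset n a b) (i : Fin (n + 1)), x.1 i ∈ Set.Icc (0:ℤ) (a + n) := by
    rintro ⟨p, h0, hl, hP, hd⟩ i
    refine ⟨hP i, le_trans (path_le h0 hd i) ?_⟩
    have := i.isLt; push_cast; omega
  have hfin : (Set.Icc (0:ℤ) (a + n)).Finite := Set.finite_Icc _ _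
  haveI := hfin.to_subtype
  refine Finite.of_injective
    (fun x => (fun i => (⟨x.1 i, hmem x i⟩ : Set.Icc (0:ℤ) (a + n)))) ?_
  intro x y h
  apply Subtype.ext
  funext i
  have := congrFun h i
  exact congrArg Subtype.val this

lemma pset_isEmpty {n : ℕ} {a b : ℤ} (h : a + n < b) : IsEmpty (pset n a b) := by
  constructor
  rintro ⟨p, h0, hl, hP, hd⟩
  have := path_le h0 hd (Fin.last n)
  rw [hl] at this
  simp only [Fin.val_last] at this
  omega

lemma pathCount_eq_zero {n : ℕ} {a b : ℤ} (h : a + n < b) :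
    pathCount n a b (fun x => 0 ≤ x) = 0 := by
  rw [pathCount_eq]
  haveI := pset_isEmpty h
  exact Nat.card_of_isEmpty

lemma pathCount_zero (a b : ℤ) (ha : 0 ≤ a) :
    pathCount 0 a b (fun x => 0 ≤ x) = if a = b then 1 else 0 := by
  rw [pathCount_eq]
  by_cases hab : a = b
  · subst hab
    rw [if_pos rfl]
    haveI : Unique (pset 0 a a) := by
      refine ⟨⟨⟨fun _ => a, rfl, rfl, fun _ => ha, fun i => i.elim0⟩⟩, ?_⟩
      rintro ⟨p, h0, hl, hP, hd⟩
      apply Subtype.ext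
      funext i
      show p i = a
      have : i = 0 := Fin.fin_one_eq_zero i
      rw [this, h0]
    exact Nat.card_unique
  · rw [if_neg hab]
    haveI : IsEmpty (pset 0 a b) := by
      constructor
      rintro ⟨p, h0, hl, _, _⟩
      exact hab (h0 ▸ hl ▸ rfl)
    exact Nat.card_of_isEmpty

def fiberEquiv (n : ℕ) (a b c : ℤ) (hb : 0 ≤ b) (hc : b - c = 1 ∨ b - c ≤ -1) :
    {x : pset (n + 1) a b // x.1 (Fin.castSucc (Fin.last n)) = c} ≃ pset n a c where
  toFun x := ⟨fun i => x.1.1 i.castSucc,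
    by show x.1.1 (Fin.castSucc 0) = a; rw [Fin.castSucc_zero]; exact x.1.2.1,
    x.2,
    fun i => x.1.2.2.2.1 i.castSucc,
    fun i => by
      have h := x.1.2.2.2.2 i.castSucc
      rwa [Fin.succ_castSucc] at h⟩
  invFun y := by
    refine ⟨⟨Fin.snoc y.1 b, ?_, ?_, ?_, ?_⟩, ?_⟩
    · show (Fin.snoc y.1 b : Fin (n + 2) → ℤ) 0 = a
      rw [show (0 : Fin (n + 2)) = (0 : Fin (n + 1)).castSucc from by simp, Fin.snoc_castSucc]
      exact y.2.1
    · exact Fin.snoc_last _ _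
    · intro i
      show (0:ℤ) ≤ (Fin.snoc y.1 b : Fin (n + 2) → ℤ) i
      induction i using Fin.lastCases with
      | last => rw [Fin.snoc_last]; exact hb
      | cast k => rw [Fin.snoc_castSucc]; exact y.2.2.2.1 k
    · intro i
      show (Fin.snoc y.1 b : Fin (n + 2) → ℤ) i.succ
            - (Fin.snoc y.1 b : Fin (n + 2) → ℤ) i.castSucc = 1 ∨ _ ≤ -1
      induction i using Fin.lastCases with
      | last =>
        rw [Fin.succ_last, Fin.snoc_last, Fin.snoc_castSucc, y.2.2.1]
        exact hc
      | cast k =>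
        rw [Fin.succ_castSucc, Fin.snoc_castSucc, Fin.snoc_castSucc]
        exact y.2.2.2.2 k
    · show (Fin.snoc y.1 b : Fin (n + 2) → ℤ) ((Fin.last n).castSucc) = c
      rw [Fin.snoc_castSucc]
      exact y.2.2.1
  left_inv x := by
    apply Subtype.ext
    apply Subtype.ext
    funext i
    show (Fin.snoc (fun i => x.1.1 i.castSucc) b : Fin (n + 2) → ℤ) i = x.1.1 i
    induction i using Fin.lastCases with
    | last => rw [Fin.snoc_last]; exact x.1.2.2.1.symm
    | cast k => rw [Fin.snoc_castSucc]
  right_inv y := by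
    apply Subtype.ext
    funext i
    show (Fin.snoc y.1 b : Fin (n + 2) → ℤ) i.castSucc = y.1 i
    rw [Fin.snoc_castSucc]

lemma pathCount_succ (n : ℕ) (a b : ℤ) (hb : 0 ≤ b) :
    pathCount (n + 1) a b (fun x => 0 ≤ x) =
      (if 1 ≤ b then pathCount n a (b - 1) (fun x => 0 ≤ x) else 0)
        + ∑ c ∈ Finset.Icc (b + 1) (a + n), pathCount n a c (fun x => 0 ≤ x) := by
  classical
  set S : Finset ℤ := (if 1 ≤ b then {b - 1} else ∅) ∪ Finset.Icc (b + 1) (a + n) with hS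
  haveI : Fintype (pset (n + 1) a b) := Fintype.ofFinite _
  set g : pset (n + 1) a b → ℤ := fun x => x.1 (Fin.castSucc (Fin.last n)) with hg
  have hgS : ∀ x : pset (n + 1) a b, g x ∈ S := by
    rintro ⟨p, h0, hl, hP, hd⟩
    have hstep := hd (Fin.last n)
    rw [Fin.succ_last, hl] at hstep
    have hbound : p (Fin.castSucc (Fin.last n)) ≤ a + n := by
      have h2 := path_le h0 hd (Fin.castSucc (Fin.last n))
      simpa using h2
    have hge : (0:ℤ) ≤ p (Fin.castSucc (Fin.last n)) := hP _
    show p (Fin.castSucc (Fin.last n)) ∈ S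
    rcases hstep with h | h
    · refine Finset.mem_union_left _ ?_
      rw [if_pos (by omega : (1:ℤ) ≤ b), Finset.mem_singleton]
      omega
    · exact Finset.mem_union_right _ (Finset.mem_Icc.2 ⟨by omega, hbound⟩)
  have key : pathCount (n + 1) a b (fun x => 0 ≤ x)
      = ∑ c ∈ S, pathCount n a c (fun x => 0 ≤ x) := by
    rw [pathCount_eq, Nat.card_eq_fintype_card, ← Finset.card_univ,
        Finset.card_eq_sum_card_fiberwise (fun x _ => hgS x)]
    refine Finset.sum_congr rfl fun c hcS => ?_
    have hc : b - c = 1 ∨ b - c ≤ -1 := by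
      rw [hS, Finset.mem_union] at hcS
      rcases hcS with h | h
      · by_cases h1b : 1 ≤ b
        · rw [if_pos h1b, Finset.mem_singleton] at h; omega
        · rw [if_neg h1b] at h; simp at h
      · rw [Finset.mem_Icc] at h; omega
    rw [pathCount_eq]
    calc (Finset.univ.filter fun x => g x = c).card
        = Fintype.card {x : pset (n + 1) a b // g x = c} := (Fintype.card_subtype _).symm
      _ = Nat.card {x : pset (n + 1) a b // g x = c} := Nat.card_eq_fintype_card.symm
      _ = Nat.card (pset n a c) := Nat.card_congr (fiberEquiv n a b c hb hc)
  rw [key, hS]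
  have hdisj : Disjoint (if 1 ≤ b then ({b - 1} : Finset ℤ) else ∅)
      (Finset.Icc (b + 1) (a + n)) := by
    split
    · rw [Finset.disjoint_left]
      intro x hx hx2
      rw [Finset.mem_singleton] at hx
      rw [Finset.mem_Icc] at hx2
      omega
    · exact Finset.disjoint_empty_left _
  rw [Finset.sum_union hdisj]
  congr 1
  split <;> simp

lemma count_rec (n : ℕ) (a b : ℤ) (hb : 0 ≤ b) :
    (pathCount (n + 1) a b (fun x => 0 ≤ x) : ℤ)
        - pathCount (n + 1) a (b + 1) (fun x => 0 ≤ x)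
      = (if 1 ≤ b then (pathCount n a (b - 1) (fun x => 0 ≤ x) : ℤ) else 0)
        - pathCount n a b (fun x => 0 ≤ x) + pathCount n a (b + 1) (fun x => 0 ≤ x) := by
  rw [pathCount_succ n a b hb, pathCount_succ n a (b + 1) (by omega)]
  rw [if_pos (by omega : (1:ℤ) ≤ b + 1)]
  have hbb : b + 1 - 1 = b := by ring
  rw [hbb]
  by_cases hU : b + 1 ≤ a + n
  · have hsplit : Finset.Icc (b + 1) (a + n) = insert (b + 1) (Finset.Icc (b + 2) (a + n)) := by
      ext x; simp only [Finset.mem_Icc, Finset.mem_insert]; omega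
    rw [hsplit, Finset.sum_insert (by simp only [Finset.mem_Icc]; omega)]
    split_ifs <;> push_cast <;> ring
  · have h1e : Finset.Icc (b + 1) (a + n) = ∅ := Finset.Icc_eq_empty (by omega)
    have h2e : Finset.Icc (b + 2) (a + n) = ∅ := Finset.Icc_eq_empty (by omega)
    have h0 : pathCount n a (b + 1) (fun x => 0 ≤ x) = 0 := pathCount_eq_zero (by omega)
    have hb2 : b + 1 + 1 = b + 2 := by ring
    rw [hb2, h1e, h2e, h0]
    split_ifs <;> push_cast <;> ring

/-! ### Series infrastructure -/

lemma q_unit : q * invOfUnit q 1 = 1 := by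
  apply PowerSeries.mul_invOfUnit
  simp [q]

lemma w_mul_q : w * q = X := by
  rw [w, mul_assoc, mul_comm (invOfUnit q 1) q, q_unit, mul_one]

lemma constantCoeff_w : constantCoeff w = 0 := by simp [w]

lemma coeff_w_pow_eq_zero {l n : ℕ} (h : l < n) : coeff l (w ^ n) = 0 := by
  have hd : X ^ n ∣ w ^ n := pow_dvd_pow_of_dvd ⟨invOfUnit q 1, rfl⟩ n
  obtain ⟨φ, hφ⟩ := hd
  rw [hφ, PowerSeries.coeff_X_pow_mul', if_neg (by omega)]

noncomputable def zseries (a : ℕ → ℤ) : PowerSeries ℤ :=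
  PowerSeries.mk fun N => ∑ n ∈ range (N + 1), a n * coeff N (w ^ n)

lemma series_eq_zseries (a : ℕ → ℕ) : series a = zseries (fun n => (a n : ℤ)) := rfl

lemma coeff_zseries (a : ℕ → ℤ) (N : ℕ) :
    coeff N (zseries a) = ∑ n ∈ range (N + 1), a n * coeff N (w ^ n) :=
  coeff_mk _ _

lemma zseries_sub (α β : ℕ → ℤ) :
    zseries (fun n => α n - β n) = zseries α - zseries β := by
  ext N
  simp only [coeff_zseries, map_sub, sub_mul, Finset.sum_sub_distrib]

lemma zseries_delta (c : ℤ) :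
    zseries (fun n => if n = 0 then c else 0) = PowerSeries.C c := by
  ext N
  rw [coeff_zseries, Finset.sum_eq_single 0]
  · rw [pow_zero, if_pos rfl, PowerSeries.coeff_one, PowerSeries.coeff_C]
    split_ifs <;> simp
  · intro n _ hn
    rw [if_neg hn, zero_mul]
  · intro h
    simp at h

lemma zseries_shift (α β : ℕ → ℤ) (h0 : α 0 = 0) (h : ∀ n, α (n + 1) = β n) :
    zseries α = w * zseries β := by
  ext N
  rw [coeff_zseries]
  have hQ : coeff N (w * zseries β)
      = coeff N (w * ∑ n ∈ range N, PowerSeries.C (β n) * w ^ n) := by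
    rw [PowerSeries.coeff_mul, PowerSeries.coeff_mul]
    apply Finset.sum_congr rfl
    rintro ⟨k, l⟩ hkl
    rw [Finset.HasAntidiagonal.mem_antidiagonal] at hkl
    by_cases hk : k = 0
    · subst hk
      have : coeff 0 w = 0 := by
        rw [PowerSeries.coeff_zero_eq_constantCoeff]; exact constantCoeff_w
      simp [this]
    · congr 1
      have hl : l < N := by omega
      rw [coeff_zseries, map_sum]
      have hterm : ∀ n ∈ range N,
          coeff l (PowerSeries.C (β n) * w ^ n) = β n * coeff l (w ^ n) := by
        intro n _
        rw [PowerSeries.coeff_C_mul]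
      rw [Finset.sum_congr rfl hterm]
      apply Finset.sum_subset (Finset.range_subset_range.2 (by omega))
      intro n _ hn
      rw [Finset.mem_range, not_lt] at hn
      rw [coeff_w_pow_eq_zero (by omega), mul_zero]
  rw [hQ, Finset.mul_sum, map_sum, Finset.sum_range_succ', h0, zero_mul, add_zero]
  apply Finset.sum_congr rfl
  intro n _
  rw [h n]
  have : w * (PowerSeries.C (β n) * w ^ n) = PowerSeries.C (β n) * w ^ (n + 1) := by
    ring
  rw [this, PowerSeries.coeff_C_mul]

lemma zseries_add (α β : ℕ → ℤ) :
    zseries (fun n => α n + β n) = zseries α + zseries β := by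
  ext N
  simp only [coeff_zseries, map_add, add_mul, Finset.sum_add_distrib]

noncomputable def Gs (t j : ℕ) : PowerSeries ℤ :=
  zseries (fun n => (pathCount n t j (fun x => 0 ≤ x) : ℤ))

noncomputable def dd (t j : ℕ) : PowerSeries ℤ := if t = j then 1 else 0

lemma dd_eq (t j : ℕ) : dd t j = PowerSeries.C (if t = j then 1 else 0) := by
  unfold dd; split <;> simp

lemma f0 (t j : ℕ) :
    (pathCount 0 (t : ℤ) (j : ℤ) (fun x => 0 ≤ x) : ℤ) = if t = j then 1 else 0 := by
  rw [pathCount_zero _ _ (Int.natCast_nonneg t)]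
  by_cases h : t = j
  · rw [if_pos (by exact_mod_cast h), if_pos h]; rfl
  · rw [if_neg (by exact_mod_cast h), if_neg h]; rfl

lemma serRecS (t j : ℕ) :
    Gs t (j + 1) - Gs t (j + 2) - dd t (j + 1) + dd t (j + 2)
      = w * (Gs t j - Gs t (j + 1) + Gs t (j + 2)) := by
  set f : ℕ → ℕ → ℤ := fun n k => (pathCount n (t : ℤ) (k : ℤ) (fun x => 0 ≤ x) : ℤ) with hf
  have key := zseries_shift
    (fun n => f n (j + 1) - f n (j + 2)
      - if n = 0 then ((if t = j + 1 then 1 else 0) - (if t = j + 2 then 1 else 0)) else 0)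
    (fun n => f n j - f n (j + 1) + f n (j + 2))
    (by
      simp only [hf]
      simp only [if_true]; rw [f0 t (j + 1), f0 t (j + 2)]
      ring)
    (by
      intro n
      simp only [if_neg (Nat.succ_ne_zero n), sub_zero, hf]
      have h := count_rec n (t : ℤ) ((j : ℤ) + 1) (by positivity)
      rw [if_pos (by omega : (1:ℤ) ≤ (j:ℤ) + 1)] at h
      have e1 : ((j:ℤ) + 1 - 1) = (j : ℤ) := by ring
      rw [e1] at h
      have e2 : ((j + 1 : ℕ) : ℤ) = (j : ℤ) + 1 := by push_cast; ring
      have e3 : ((j + 2 : ℕ) : ℤ) = (j : ℤ) + 1 + 1 := by push_cast; ring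
      rw [e2, e3]
      linear_combination h)
  have lhs_eq : zseries (fun n => f n (j + 1) - f n (j + 2)
      - if n = 0 then ((if t = j + 1 then 1 else 0) - (if t = j + 2 then 1 else 0)) else 0)
      = Gs t (j + 1) - Gs t (j + 2) - dd t (j + 1) + dd t (j + 2) := by
    have hGs : ∀ k, zseries (fun n => f n k) = Gs t k := fun k => rfl
    rw [zseries_sub, zseries_sub, zseries_delta, hGs, hGs, dd_eq, dd_eq, map_sub]
    ring
  have rhs_eq : zseries (fun n => f n j - f n (j + 1) + f n (j + 2))
      = Gs t j - Gs t (j + 1) + Gs t (j + 2) := by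
    rw [zseries_add, zseries_sub]
    rfl
  rw [← lhs_eq, key, rhs_eq]

lemma serRec0 (t : ℕ) :
    Gs t 0 - Gs t 1 - dd t 0 + dd t 1 = w * (Gs t 1 - Gs t 0) := by
  set f : ℕ → ℕ → ℤ := fun n k => (pathCount n (t : ℤ) (k : ℤ) (fun x => 0 ≤ x) : ℤ) with hf
  have key := zseries_shift
    (fun n => f n 0 - f n 1
      - if n = 0 then ((if t = 0 then 1 else 0) - (if t = 1 then 1 else 0)) else 0)
    (fun n => f n 1 - f n 0)
    (by
      simp only [hf]
      simp only [if_true]; rw [f0 t 0, f0 t 1]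
      ring)
    (by
      intro n
      simp only [if_neg (Nat.succ_ne_zero n), sub_zero, hf]
      have h := count_rec n (t : ℤ) 0 le_rfl
      rw [if_neg (by omega : ¬ (1:ℤ) ≤ 0)] at h
      have e1 : ((0 : ℕ) : ℤ) = (0 : ℤ) := rfl
      have e2 : ((1 : ℕ) : ℤ) = (0 : ℤ) + 1 := by norm_num
      rw [e1, e2]
      linear_combination h)
  have lhs_eq : zseries (fun n => f n 0 - f n 1
      - if n = 0 then ((if t = 0 then 1 else 0) - (if t = 1 then 1 else 0)) else 0)
      = Gs t 0 - Gs t 1 - dd t 0 + dd t 1 := by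
    have hGs : ∀ k, zseries (fun n => f n k) = Gs t k := fun k => rfl
    rw [zseries_sub, zseries_sub, zseries_delta, hGs, hGs, dd_eq, dd_eq, map_sub]
    ring
  have rhs_eq : zseries (fun n => f n 1 - f n 0) = Gs t 1 - Gs t 0 := by
    rw [zseries_sub]
    rfl
  rw [← lhs_eq, key, rhs_eq]

noncomputable def Ee (t j : ℕ) : PowerSeries ℤ := Gs t j * ((1 - X) * (1 + X) ^ (j + 2))

noncomputable def Aa (t j : ℕ) : PowerSeries ℤ :=
  if j < t then X * (1 - X ^ (j + 1)) else X ^ (j - t) * (1 - X ^ (t + 2))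

noncomputable def Eb (t j : ℕ) : PowerSeries ℤ := q * (1 + X) ^ t * Aa t j

lemma qRecS (t j : ℕ) :
    q * (Gs t (j + 1) - Gs t (j + 2) - dd t (j + 1) + dd t (j + 2))
      = X * (Gs t j - Gs t (j + 1) + Gs t (j + 2)) := by
  rw [← w_mul_q, serRecS]
  ring

lemma qRec0 (t : ℕ) :
    q * (Gs t 0 - Gs t 1 - dd t 0 + dd t 1) = X * (Gs t 1 - Gs t 0) := by
  rw [← w_mul_q, serRec0]
  ring

lemma EeRecS (t j : ℕ) :
    Ee t (j + 2) = (1 + X) * Ee t (j + 1) - X * Ee t j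
      - (dd t (j + 1) - dd t (j + 2)) * (q * (1 - X) * (1 + X) ^ (j + 2)) := by
  have h2 := qRecS t j
  simp only [q] at h2 ⊢
  simp only [Ee]
  linear_combination (-((1 - X) * (1 + X) ^ (j + 2))) * h2

lemma EeRec0 (t : ℕ) :
    Ee t 1 = (1 + X) * Ee t 0
      - (dd t 0 - dd t 1) * (q * (1 - X) * (1 + X) ^ 1) := by
  have h2 := qRec0 t
  simp only [q] at h2 ⊢
  simp only [Ee]
  linear_combination (-((1 - X) * (1 + X))) * h2

lemma ddeq (t j : ℕ) (h : t = j) : dd t j = 1 := if_pos h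
lemma ddne (t j : ℕ) (h : t ≠ j) : dd t j = 0 := if_neg h

lemma EbRecS (t j : ℕ) :
    Eb t (j + 2) = (1 + X) * Eb t (j + 1) - X * Eb t j
      - (dd t (j + 1) - dd t (j + 2)) * (q * (1 - X) * (1 + X) ^ (j + 2)) := by
  rcases lt_trichotomy (j + 2) t with h | h | h
  · -- all low
    rw [ddne t (j + 1) (by omega), ddne t (j + 2) (by omega)]
    simp only [Eb, Aa, if_pos (by omega : j + 2 < t), if_pos (by omega : j + 1 < t),
      if_pos (by omega : j < t)]
    ring
  · -- t = j + 2
    subst h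
    rw [ddne (j + 2) (j + 1) (by omega), ddeq (j + 2) (j + 2) rfl]
    simp only [Eb, Aa, if_neg (lt_irrefl (j + 2)), if_pos (by omega : j + 1 < j + 2),
      if_pos (by omega : j < j + 2), Nat.sub_self, pow_zero, q]
    ring
  · -- t < j + 2 : either t = j + 1 or t ≤ j
    rcases Nat.lt_or_ge j t with h2 | h2
    · -- t = j + 1
      have ht : t = j + 1 := by omega
      subst ht
      rw [ddeq (j + 1) (j + 1) rfl, ddne (j + 1) (j + 2) (by omega)]
      simp only [Eb, Aa, if_neg (by omega : ¬ j + 2 < j + 1), if_neg (lt_irrefl (j + 1)),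
        if_pos (by omega : j < j + 1), Nat.sub_self, pow_zero,
        (by omega : j + 2 - (j + 1) = 1), pow_one, q]
      ring
    · -- t ≤ j
      obtain ⟨k, rfl⟩ := Nat.exists_eq_add_of_le h2
      rw [ddne t (t + k + 1) (by omega), ddne t (t + k + 2) (by omega)]
      simp only [Eb, Aa, if_neg (by omega : ¬ t + k + 2 < t), if_neg (by omega : ¬ t + k + 1 < t),
        if_neg (by omega : ¬ t + k < t), (by omega : t + k - t = k),
        (by omega : t + k + 1 - t = k + 1), (by omega : t + k + 2 - t = k + 2)]
      ring

lemma EbRec0 (t : ℕ) :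
    Eb t 1 = (1 + X) * Eb t 0
      - (dd t 0 - dd t 1) * (q * (1 - X) * (1 + X) ^ 1) := by
  match t with
  | 0 =>
    rw [ddeq 0 0 rfl, ddne 0 1 (by omega)]
    simp only [Eb, Aa, if_neg (by omega : ¬ (1:ℕ) < 0), if_neg (by omega : ¬ (0:ℕ) < 0),
      Nat.sub_self, pow_zero, (by omega : 1 - 0 = 1), pow_one, q]
    ring
  | 1 =>
    rw [ddne 1 0 (by omega), ddeq 1 1 rfl]
    simp only [Eb, Aa, if_neg (lt_irrefl 1), if_pos (by omega : (0:ℕ) < 1),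
      Nat.sub_self, pow_zero, q]
    ring
  | (m + 2) =>
    rw [ddne (m + 2) 0 (by omega), ddne (m + 2) 1 (by omega)]
    simp only [Eb, Aa, if_pos (by omega : 1 < m + 2), if_pos (by omega : 0 < m + 2)]
    ring

lemma coeff_Gs_eq_zero {t j k : ℕ} (h : t + k < j) : coeff k (Gs t j) = 0 := by
  rw [Gs, coeff_zseries]
  apply Finset.sum_eq_zero
  intro n hn
  rw [Finset.mem_range] at hn
  have : pathCount n (t : ℤ) (j : ℤ) (fun x => 0 ≤ x) = 0 :=
    pathCount_eq_zero (by push_cast; omega)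
  rw [this]
  simp

lemma coeff_Ee_eq_zero {t j N : ℕ} (h : t + N < j) : coeff N (Ee t j) = 0 := by
  rw [Ee, PowerSeries.coeff_mul]
  apply Finset.sum_eq_zero
  rintro ⟨k, l⟩ hkl
  rw [Finset.HasAntidiagonal.mem_antidiagonal] at hkl
  rw [coeff_Gs_eq_zero (by omega : t + k < j), zero_mul]

lemma coeff_Eb_eq_zero {t j N : ℕ} (h : t + N < j) : coeff N (Eb t j) = 0 := by
  have hjt : ¬ j < t := by omega
  have : Eb t j = X ^ (j - t) * (q * (1 + X) ^ t * (1 - X ^ (t + 2))) := by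
    rw [Eb, Aa, if_neg hjt]; ring
  rw [this, PowerSeries.coeff_X_pow_mul', if_neg (by omega)]

lemma Ee_eq_Eb (t j : ℕ) : Ee t j = Eb t j := by
  suffices h : ∀ N j, coeff N (Ee t j - Eb t j) = 0 by
    have h2 : Ee t j - Eb t j = 0 := by
      ext N; rw [h N j]; simp
    exact sub_eq_zero.mp h2
  intro N
  induction N using Nat.strong_induction_on with
  | _ N ih =>
    have hlow : ∀ m, m < N → ∀ i : ℕ, coeff m (Ee t i - Eb t i) = 0 := fun m hm => ih m hm
    have hXzero : ∀ ψ : PowerSeries ℤ, (∀ m, m < N → coeff m ψ = 0) →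
        coeff N (X * ψ) = 0 := by
      intro ψ hψ
      cases N with
      | zero => exact PowerSeries.coeff_zero_X_mul ψ
      | succ m => rw [PowerSeries.coeff_succ_X_mul]; exact hψ m (by omega)
    have hstep : ∀ i : ℕ, coeff N (Ee t (i + 1) - Eb t (i + 1))
        = coeff N (Ee t i - Eb t i) := by
      intro i
      cases i with
      | zero =>
        have hD : Ee t 1 - Eb t 1
            = (Ee t 0 - Eb t 0) + X * (Ee t 0 - Eb t 0) := by
          linear_combination EeRec0 t - EbRec0 t
        rw [hD, map_add, hXzero _ (fun m hm => hlow m hm 0), add_zero]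
      | succ i2 =>
        have hD : Ee t (i2 + 2) - Eb t (i2 + 2)
            = (Ee t (i2 + 1) - Eb t (i2 + 1)) + X * (Ee t (i2 + 1) - Eb t (i2 + 1))
              - X * (Ee t i2 - Eb t i2) := by
          linear_combination EeRecS t i2 - EbRecS t i2
        rw [hD, map_sub, map_add, hXzero _ (fun m hm => hlow m hm (i2 + 1)),
          hXzero _ (fun m hm => hlow m hm i2), add_zero, sub_zero]
    have hconst : ∀ i : ℕ, coeff N (Ee t i - Eb t i) = coeff N (Ee t 0 - Eb t 0) := by
      intro i
      induction i with
      | zero => rfl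
      | succ i2 ih2 => rw [hstep i2, ih2]
    intro i
    rw [hconst i, ← hconst (t + N + 1), map_sub,
      coeff_Ee_eq_zero (by omega), coeff_Eb_eq_zero (by omega), sub_zero]

theorem stmt13 (t j : ℕ) (htj : t ≤ j) :
    (series fun n => pathCount n t j (fun x => 0 ≤ x)) * (1 - X) * (1 + X) ^ (j - t + 2) =
      X ^ (j - t) * (1 - X ^ (t + 2)) * q := by
  obtain ⟨k, rfl⟩ := Nat.exists_eq_add_of_le htj
  have hser : (series fun n => pathCount n (t : ℤ) (((t + k : ℕ) : ℤ)) (fun x => 0 ≤ x)) = Gs t (t + k) := rfl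
  rw [hser, (by omega : t + k - t = k)]
  have hne : ((1 + X : PowerSeries ℤ)) ^ t ≠ 0 := by
    apply pow_ne_zero
    intro hcon
    have := congrArg (constantCoeff) hcon
    simp at this
  apply mul_left_cancel₀ hne
  have hE := Ee_eq_Eb t (t + k)
  rw [Ee, Eb, Aa, if_neg (by omega : ¬ t + k < t), (by omega : t + k - t = k)] at hE
  calc (1 + X) ^ t * (Gs t (t + k) * (1 - X) * (1 + X) ^ (k + 2))
      = Gs t (t + k) * ((1 - X) * (1 + X) ^ (t + k + 2)) := by
        rw [pow_add, pow_add]; ring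
    _ = q * (1 + X) ^ t * (X ^ k * (1 - X ^ (t + 2))) := hE
    _ = (1 + X) ^ t * (X ^ k * (1 - X ^ (t + 2)) * q) := by ring
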